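/- Let q be a prime power, A ⊆ F_{q^ℓ} with |A| = n, α* ∈ A, and let g_{s+1},...,g_ℓ ∈ F_{q^ℓ}[x] be polynomials of degree < r = n − k such that {g_i(α*)}_{i=s+1}^{ℓ} is F_q-linearly independent. For each α ∈ A \ {α*} let b_α = rank_{F_q}{g_i(α)}_{i=s+1}^ℓ, and let S_α = {e ∈ F_q^{ℓ−s} : ∑_i e_i g_i(α) = 0}, so dim S_α = ℓ − s − b_α. Then ∑_{α ∈ A\{α*}} q^{−b_α} ≤ ((r−1)(q^{ℓ−s} − 1) + n − 1)/q^{ℓ−s}. -/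

import Mathlib

open Module

set_option maxHeartbeats 1000000

/-- for check polynomials `g_i` of degree `< r = n − k` whose evaluations at
`α*` are `F_q`-linearly independent, with `b_α = rank_{F_q}{g_i(α)}`, one has
`∑_{α ≠ α*} q^{−b_α} ≤ ((r−1)(q^{ℓ−s}−1)+n−1)/q^{ℓ−s}`. -/
theorem stmt18 {K F : Type*} [Field K] [Field F] [Algebra K F] [Fintype K] [Fintype F]
    [DecidableEq F]
    (q ℓ s n k : ℕ) (hq : Fintype.card K = q) (hℓ : finrank K F = ℓ) (hs : s ≤ ℓ)
    (A : Finset F) (hAn : A.card = n) (αs : F) (hαs : αs ∈ A)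
    (g : Fin (ℓ - s) → Polynomial F)
    (hdeg : ∀ i, (g i).degree < ((n - k : ℕ) : ℕ))
    (hli : LinearIndependent K (fun i => (g i).eval αs)) :
    ∑ α ∈ A.erase αs,
      (q : ℝ) ^ (-(finrank K ↥(Submodule.span K (Set.range fun i => (g i).eval α)) : ℤ))
    ≤ ((((n - k : ℕ) : ℝ) - 1) * ((q : ℝ) ^ (ℓ - s) - 1) + (n : ℝ) - 1) /
        (q : ℝ) ^ (ℓ - s) := by
  classical
  set r := n - k with hrdef
  have hq1 : 1 ≤ q := hq ▸ Fintype.card_pos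
  have hqR : (0 : ℝ) < q := by exact_mod_cast hq1
  have hn1 : 1 ≤ n := hAn ▸ Finset.card_pos.mpr ⟨αs, hαs⟩
  by_cases hm0 : ℓ - s = 0
  · have hempty : IsEmpty (Fin (ℓ - s)) := by rw [hm0]; infer_instance
    have hterm : ∀ α : F,
        (q : ℝ) ^ (-(finrank K
          ↥(Submodule.span K (Set.range fun i => (g i).eval α)) : ℤ)) = 1 := by
      intro α
      have h1 : (Set.range fun i : Fin (ℓ - s) => (g i).eval α) = ∅ := Set.range_eq_empty _
      rw [h1, Submodule.span_empty, finrank_bot]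
      norm_num
    rw [Finset.sum_congr rfl (fun α _ => hterm α), Finset.sum_const, hm0]
    rw [Finset.card_erase_of_mem hαs, hAn]
    have : ((n - 1 : ℕ) : ℝ) = (n : ℝ) - 1 := by
      push_cast [Nat.cast_sub hn1]; ring
    simp only [nsmul_eq_mul, mul_one, pow_zero, div_one, this]
    push_cast
    linarith
  · have hmpos : 0 < ℓ - s := Nat.pos_of_ne_zero hm0
    have hr1 : 1 ≤ r := by
      by_contra h
      push_neg at h
      have h0 : r = 0 := Nat.lt_one_iff.mp h
      have i : Fin (ℓ - s) := ⟨0, hmpos⟩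
      have hd := hdeg i
      rw [h0] at hd
      have hgi : g i = 0 := Polynomial.degree_eq_bot.mp (by
        exact_mod_cast Nat.WithBot.lt_zero_iff.mp (by exact_mod_cast hd))
      have hne := hli.ne_zero i
      simp [hgi] at hne
    set L : F → ((Fin (ℓ - s) → K) →ₗ[K] F) :=
      fun α => Fintype.linearCombination K (fun i => (g i).eval α) with hL
    have hLapply : ∀ α e, L α e = ∑ i, e i • (g i).eval α := fun α e => rfl
    have hrank : ∀ α : F,
        finrank K ↥(Submodule.span K (Set.range fun i => (g i).eval α))
          + finrank K ↥(LinearMap.ker (L α)) = ℓ - s := by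
      intro α
      have h1 : LinearMap.range (L α)
          = Submodule.span K (Set.range fun i => (g i).eval α) :=
        Fintype.range_linearCombination K _
      rw [← h1, LinearMap.finrank_range_add_finrank_ker,
        Module.finrank_fintype_fun_eq_card, Fintype.card_fin]
    have hcard : ∀ α : F, (Fintype.card ↥(LinearMap.ker (L α)))
        = (Finset.univ.filter fun e : Fin (ℓ - s) → K => L α e = 0).card := by
      intro α
      have h1 : Fintype.card ↥(LinearMap.ker (L α))
          = Fintype.card {e : Fin (ℓ - s) → K // L α e = 0} :=
        Fintype.card_congr (Equiv.subtypeEquivRight fun e => LinearMap.mem_ker)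
      rw [h1, Fintype.card_subtype]
    have hcardpow : ∀ α : F, Fintype.card ↥(LinearMap.ker (L α))
        = q ^ finrank K ↥(LinearMap.ker (L α)) := by
      intro α; rw [← hq]; exact card_eq_pow_finrank
    -- counting bound over ℕ
    have hcount : ∑ α ∈ A.erase αs,
        (Finset.univ.filter fun e : Fin (ℓ - s) → K => L α e = 0).card
        ≤ (n - 1) + (q ^ (ℓ - s) - 1) * (r - 1) := by
      have swap : ∑ α ∈ A.erase αs,
            (Finset.univ.filter fun e : Fin (ℓ - s) → K => L α e = 0).card
          = ∑ e ∈ (Finset.univ : Finset (Fin (ℓ - s) → K)),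
              ((A.erase αs).filter fun α => L α e = 0).card := by
        simp_rw [Finset.card_filter]
        exact Finset.sum_comm
      rw [swap, ← Finset.sum_erase_add _ _ (Finset.mem_univ (0 : Fin (ℓ - s) → K))]
      have h0 : ((A.erase αs).filter fun α => L α (0 : Fin (ℓ - s) → K) = 0).card ≤ n - 1 := by
        calc ((A.erase αs).filter fun α => L α (0 : Fin (ℓ - s) → K) = 0).card
            ≤ (A.erase αs).card := Finset.card_filter_le _ _
          _ = n - 1 := by rw [Finset.card_erase_of_mem hαs, hAn]
      have he : ∀ e ∈ (Finset.univ : Finset (Fin (ℓ - s) → K)).erase 0,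
          ((A.erase αs).filter fun α => L α e = 0).card ≤ r - 1 := by
        intro e hee
        have hene : e ≠ 0 := Finset.ne_of_mem_erase hee
        set P : Polynomial F := ∑ i, e i • g i with hP
        have hPeval : ∀ α, P.eval α = L α e := by
          intro α
          rw [hP, Polynomial.eval_finset_sum, hLapply]
          simp [Polynomial.eval_smul]
        have hPne : P ≠ 0 := by
          intro h
          have h1 : L αs e = 0 := by rw [← hPeval, h]; simp
          have h2 := Fintype.linearIndependent_iff.mp hli e (by
            rw [← hLapply]; exact h1)
          exact hene (funext fun i => h2 i)
        have hPdeg : P.degree < (r : ℕ) := by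
          rw [hP, ← Polynomial.mem_degreeLT]
          apply Submodule.sum_mem
          intro i _
          rw [algebra_compatible_smul F (e i) (g i)]
          exact Submodule.smul_mem _ _ (Polynomial.mem_degreeLT.mpr (hdeg i))
        have hPnat : P.natDegree ≤ r - 1 :=
          Nat.le_sub_one_of_lt ((Polynomial.natDegree_lt_iff_degree_lt hPne).mpr hPdeg)
        calc ((A.erase αs).filter fun α => L α e = 0).card
            ≤ P.roots.toFinset.card := by
              apply Finset.card_le_card
              intro α hα
              obtain ⟨-, hα2⟩ := Finset.mem_filter.mp hα
              rw [Multiset.mem_toFinset, Polynomial.mem_roots hPne]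
              exact (hPeval α).trans hα2
          _ ≤ Multiset.card P.roots := Multiset.toFinset_card_le _
          _ ≤ P.natDegree := Polynomial.card_roots' P
          _ ≤ r - 1 := hPnat
      have hsum : ∑ e ∈ (Finset.univ : Finset (Fin (ℓ - s) → K)).erase 0,
          ((A.erase αs).filter fun α => L α e = 0).card
          ≤ (q ^ (ℓ - s) - 1) * (r - 1) := by
        calc ∑ e ∈ (Finset.univ : Finset (Fin (ℓ - s) → K)).erase 0,
              ((A.erase αs).filter fun α => L α e = 0).card
            ≤ ((Finset.univ : Finset (Fin (ℓ - s) → K)).erase 0).card * (r - 1) := by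
              rw [← smul_eq_mul]
              exact Finset.sum_le_card_nsmul _ _ _ he
          _ = (q ^ (ℓ - s) - 1) * (r - 1) := by
              rw [Finset.card_erase_of_mem (Finset.mem_univ _), Finset.card_univ,
                Fintype.card_fun, hq, Fintype.card_fin]
        -- done
      omega
    -- translate each term into kernel cardinalities
    have hterm : ∀ α : F,
        (q : ℝ) ^ (-(finrank K
            ↥(Submodule.span K (Set.range fun i => (g i).eval α)) : ℤ))
          = ((Finset.univ.filter fun e : Fin (ℓ - s) → K => L α e = 0).card : ℝ)
              / (q : ℝ) ^ (ℓ - s) := by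
      intro α
      set b := finrank K ↥(Submodule.span K (Set.range fun i => (g i).eval α)) with hb
      set d := finrank K ↥(LinearMap.ker (L α)) with hd
      have hbd : b + d = ℓ - s := hrank α
      rw [← hcard α, hcardpow α, ← hd]
      push_cast
      rw [← hbd, pow_add, zpow_neg, zpow_natCast]
      field_simp
    rw [Finset.sum_congr rfl (fun α _ => hterm α), ← Finset.sum_div]
    have hqm1 : 1 ≤ q ^ (ℓ - s) := Nat.one_le_pow _ _ (by omega)
    have hnum : ∑ α ∈ A.erase αs,
        ((Finset.univ.filter fun e : Fin (ℓ - s) → K => L α e = 0).card : ℝ)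
        ≤ ((r : ℝ) - 1) * ((q : ℝ) ^ (ℓ - s) - 1) + (n : ℝ) - 1 := by
      calc ∑ α ∈ A.erase αs,
            ((Finset.univ.filter fun e : Fin (ℓ - s) → K => L α e = 0).card : ℝ)
          ≤ (((n - 1) + (q ^ (ℓ - s) - 1) * (r - 1) : ℕ) : ℝ) := by exact_mod_cast hcount
        _ = ((r : ℝ) - 1) * ((q : ℝ) ^ (ℓ - s) - 1) + (n : ℝ) - 1 := by
            push_cast [Nat.cast_sub hn1, Nat.cast_sub hr1, Nat.cast_sub hqm1]
            ring
    gcongr
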